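/- Let X₁, X₂ ∈ SL(2,ℂ) with tr(X₁) = tr(X₂) = t, Y = X₂X₁⁻¹, s = tr(Y), β = ω_k(s), γ = ω_{k+1}(s), and A = Y^k X₂ Y^{-k} X₁. Then A = I if and only if γ = β or X₂X₁ = I. -/

import Mathlib

open Matrix
open scoped MatrixGroups

private lemma ch2 (M : Matrix (Fin 2) (Fin 2) ℂ) (h : M.det = 1) :
    M * M = M.trace • M - 1 := by
  rw [Matrix.det_fin_two] at h
  ext i j
  fin_cases i <;> fin_cases j <;>
    simp [Matrix.mul_apply, Fin.sum_univ_two, Matrix.trace_fin_two, Matrix.one_apply] <;>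
    first
      | ring1
      | linear_combination -h

private lemma adj2 (M : Matrix (Fin 2) (Fin 2) ℂ) : M.adjugate = M.trace • 1 - M := by
  rw [Matrix.adjugate_fin_two]
  ext i j
  fin_cases i <;> fin_cases j <;>
    simp [Matrix.trace_fin_two, Matrix.one_apply]

private lemma seq_norm (s : ℂ) (w : ℤ → ℂ) (hw0 : w 0 = 0) (hw1 : w 1 = 1)
    (hrec : ∀ j : ℤ, w (j + 1) = s * w j - w (j - 1)) :
    ∀ j : ℤ, w j ^ 2 + w (j+1) ^ 2 - s * w j * w (j+1) = 1 := by
  intro j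
  induction j using Int.induction_on with
  | zero => simp [hw0, hw1]
  | succ i ih =>
    have h1 := hrec ((i:ℤ) + 1)
    simp only [show (i:ℤ) + 1 - 1 = (i:ℤ) by ring] at h1
    rw [h1]
    linear_combination ih
  | pred i ih =>
    have h1 := hrec (-(i:ℤ))
    simp only [show -(i:ℤ) - 1 + 1 = -(i:ℤ) by ring]
    linear_combination ih + (w (-(i:ℤ)-1) - w (-(i:ℤ)+1)) * h1

private lemma zpow_formula (Y : Matrix.SpecialLinearGroup (Fin 2) ℂ) (s : ℂ)
    (hs : (Y : Matrix (Fin 2) (Fin 2) ℂ).trace = s)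
    (w : ℤ → ℂ) (hw0 : w 0 = 0) (hw1 : w 1 = 1)
    (hrec : ∀ j : ℤ, w (j + 1) = s * w j - w (j - 1)) :
    ∀ j : ℤ, ((Y ^ j : Matrix.SpecialLinearGroup (Fin 2) ℂ) : Matrix (Fin 2) (Fin 2) ℂ)
      = w j • (Y : Matrix (Fin 2) (Fin 2) ℂ) - w (j-1) • 1 := by
  set B : Matrix (Fin 2) (Fin 2) ℂ := (Y : Matrix (Fin 2) (Fin 2) ℂ) with hB
  have hBB : B * B = s • B - 1 := by rw [← hs]; exact ch2 B Y.2
  have hBinv : ((Y⁻¹ : Matrix.SpecialLinearGroup (Fin 2) ℂ) : Matrix (Fin 2) (Fin 2) ℂ)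
      = s • 1 - B := by
    rw [Matrix.SpecialLinearGroup.coe_inv, adj2, hs]
  have hwm1 : w (-1) = -1 := by
    have h0 := hrec 0
    simp only [show (0:ℤ)+1 = 1 from rfl, show (0:ℤ)-1 = -1 from rfl, hw0, hw1] at h0
    linear_combination h0
  intro j
  induction j using Int.induction_on with
  | zero => simp [hw0, hwm1]
  | succ i ih =>
    rw [_root_.zpow_add_one, Matrix.SpecialLinearGroup.coe_mul, ih]
    have expand : (w (i:ℤ) • B - w ((i:ℤ)-1) • (1 : Matrix (Fin 2) (Fin 2) ℂ)) * B
        = w (i:ℤ) • (B*B) - w ((i:ℤ)-1) • B := by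
      simp only [sub_mul, smul_mul_assoc, one_mul]
    rw [expand, hBB]
    simp only [show (i:ℤ) + 1 - 1 = (i:ℤ) by ring]
    match_scalars
    · linear_combination -hrec (i:ℤ)
    · ring1
  | pred i ih =>
    rw [_root_.zpow_sub_one, Matrix.SpecialLinearGroup.coe_mul, ih, hBinv]
    have expand : (w (-(i:ℤ)) • B - w (-(i:ℤ)-1) • (1 : Matrix (Fin 2) (Fin 2) ℂ)) * (s • 1 - B)
        = (s * w (-(i:ℤ))) • B - w (-(i:ℤ)) • (B*B)
          - (s * w (-(i:ℤ)-1)) • (1 : Matrix (Fin 2) (Fin 2) ℂ) + w (-(i:ℤ)-1) • B := by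
      simp only [sub_mul, mul_sub, smul_mul_assoc, mul_smul_comm, mul_one, one_mul, smul_smul]
      module
    rw [expand, hBB]
    have h1 := hrec (-(i:ℤ)-1)
    simp only [show -(i:ℤ) - 1 + 1 = -(i:ℤ) by ring] at h1
    match_scalars
    · ring1
    · linear_combination h1

theorem sl2_A_eq_one_iff (X₁ X₂ Y A : Matrix.SpecialLinearGroup (Fin 2) ℂ)
    (hY : Y = X₂ * X₁⁻¹) (t s : ℂ)
    (h1 : (X₁ : Matrix (Fin 2) (Fin 2) ℂ).trace = t)
    (h2 : (X₂ : Matrix (Fin 2) (Fin 2) ℂ).trace = t)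
    (hs : (Y : Matrix (Fin 2) (Fin 2) ℂ).trace = s)
    (w : ℤ → ℂ) (hw0 : w 0 = 0) (hw1 : w 1 = 1)
    (hrec : ∀ j : ℤ, w (j + 1) = s * w j - w (j - 1)) (k : ℤ)
    (β γ : ℂ) (hβ : β = w k) (hγ : γ = w (k + 1))
    (hA : A = Y ^ k * X₂ * Y ^ (-k) * X₁) :
    A = 1 ↔ γ = β ∨ X₂ * X₁ = 1 := by
  have hinj : Function.Injective
      ((↑·) : Matrix.SpecialLinearGroup (Fin 2) ℂ → Matrix (Fin 2) (Fin 2) ℂ) :=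
    Subtype.coe_injective
  set B : Matrix (Fin 2) (Fin 2) ℂ := (Y : Matrix (Fin 2) (Fin 2) ℂ) with hBdef
  set X : Matrix (Fin 2) (Fin 2) ℂ := (X₁ : Matrix (Fin 2) (Fin 2) ℂ) with hXdef
  have hX2g : X₂ = Y * X₁ := by rw [hY, inv_mul_cancel_right]
  have hX2coe : (X₂ : Matrix (Fin 2) (Fin 2) ℂ) = B * X := by
    rw [hX2g, Matrix.SpecialLinearGroup.coe_mul]
  have hXX : X * X = t • X - 1 := by rw [← h1]; exact ch2 X X₁.2
  have hBB : B * B = s • B - 1 := by rw [← hs]; exact ch2 B Y.2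
  have hBXBX : (B*X) * (B*X) = t • (B*X) - 1 := by
    have := ch2 (X₂ : Matrix (Fin 2) (Fin 2) ℂ) X₂.2
    rw [h2, hX2coe] at this
    exact this
  have hBinvB : (s • 1 - B) * B = 1 := by
    rw [sub_mul, smul_mul_assoc, one_mul, hBB]
    module
  have e1 : (s • 1 - B) * (B * X) = X := by rw [← mul_assoc, hBinvB, one_mul]
  have hXBX : X * (B * X) = t • X - (s • 1 - B) := by
    calc X * (B*X) = ((s•1-B)*(B*X))*(B*X) := by rw [e1]
    _ = (s•1-B)*((B*X)*(B*X)) := by rw [mul_assoc]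
    _ = (s•1-B)*(t•(B*X) - 1) := by rw [hBXBX]
    _ = t•((s•1-B)*(B*X)) - (s•1-B) := by rw [mul_sub, mul_smul_comm, mul_one]
    _ = t•X - (s•1-B) := by rw [e1]
  have hBXX : B * (X * X) = t • (B*X) - B := by
    rw [hXX, mul_sub, mul_smul_comm, mul_one]
  -- powers of Y
  have hpow := zpow_formula Y s hs w hw0 hw1 hrec
  have hYk1 : ((Y ^ (k+1) : Matrix.SpecialLinearGroup (Fin 2) ℂ) : Matrix (Fin 2) (Fin 2) ℂ)
      = γ • B - β • 1 := by
    rw [hpow (k+1)]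
    simp only [show k + 1 - 1 = k by ring, ← hβ, ← hγ]
    rfl
  have hYnk : ((Y ^ (-k) : Matrix.SpecialLinearGroup (Fin 2) ℂ) : Matrix (Fin 2) (Fin 2) ℂ)
      = γ • 1 - β • B := by
    have hz : (Y ^ (-k) : Matrix.SpecialLinearGroup (Fin 2) ℂ) = (Y ^ k)⁻¹ := by
      rw [_root_.zpow_neg]
    rw [hz, Matrix.SpecialLinearGroup.coe_inv, adj2, hpow k]
    rw [trace_sub, trace_smul, trace_smul, trace_one, hs]
    have hk := hrec k
    rw [← hβ, ← hγ] at hk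
    have hk1 : w (k-1) = s * β - γ := by linear_combination hk
    rw [hk1, ← hβ]
    match_scalars <;> simp only [smul_eq_mul, Fintype.card_fin, Nat.cast_ofNat] <;> push_cast <;> ring1
  have hAg : A = Y ^ (k+1) * X₁ * Y ^ (-k) * X₁ := by
    rw [hA, hX2g, ← mul_assoc, ← _root_.zpow_add_one]
  have hAcoe : (A : Matrix (Fin 2) (Fin 2) ℂ)
      = (γ • B - β • 1) * X * (γ • 1 - β • B) * X := by
    rw [hAg, Matrix.SpecialLinearGroup.coe_mul, Matrix.SpecialLinearGroup.coe_mul,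
      Matrix.SpecialLinearGroup.coe_mul, hYk1, hYnk]
  have hAm : (A : Matrix (Fin 2) (Fin 2) ℂ)
      = (t*γ*(γ-β)) • (B*X) - (t*β*(γ-β)) • X + (β^2-γ^2) • B + (2*γ*β - s*β^2) • 1 := by
    rw [hAcoe]
    have step : (γ • B - β • (1 : Matrix (Fin 2) (Fin 2) ℂ)) * X * (γ • 1 - β • B) * X
        = (γ*γ) • (B*(X*X)) - (γ*β) • ((B*X)*(B*X)) - (β*γ) • (X*X) + (β*β) • (X*(B*X)) := by
      simp only [sub_mul, mul_sub, smul_mul_assoc, mul_smul_comm, smul_smul, mul_one, one_mul,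
        mul_assoc]
      module
    rw [step, hBXX, hBXBX, hXX, hXBX]
    match_scalars <;> ring1
  have hCk : β^2 + γ^2 - s*β*γ = 1 := by
    rw [hβ, hγ]
    linear_combination seq_norm s w hw0 hw1 hrec k
  constructor
  · intro hA1
    by_cases hgb : γ = β
    · exact Or.inl hgb
    · right
      have hδ : γ - β ≠ 0 := sub_ne_zero.mpr hgb
      have hE : (t*γ*(γ-β)) • (B*X) - (t*β*(γ-β)) • X + (β^2-γ^2) • B
          + (2*γ*β - s*β^2) • (1 : Matrix (Fin 2) (Fin 2) ℂ) = 1 := by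
        rw [← hAm, hA1, Matrix.SpecialLinearGroup.coe_one]
      have htBX : (B*X).trace = t := by rw [← hX2coe]; exact h2
      have hT := congrArg Matrix.trace hE
      simp only [trace_sub, trace_add, trace_smul, trace_one, htBX, h1, hs, smul_eq_mul,
        Fintype.card_fin, Nat.cast_ofNat] at hT
      have hs2 : s = t^2 - 2 := by
        have hz : (γ-β)^2 * (t^2 - s - 2) = 0 := by
          linear_combination hT - 2*hCk
        rcases mul_eq_zero.mp hz with h | h
        · exact absurd (pow_eq_zero_iff (n := 2) (by norm_num) |>.mp h) hδ
        · linear_combination -h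
      subst hs2
      have hF : (t*γ) • (B*X) - (t*β) • X - (γ+β) • B
          + ((t^2-2)*β+β-γ) • (1 : Matrix (Fin 2) (Fin 2) ℂ) = 0 := by
        have hEz : (t*γ*(γ-β)) • (B*X) - (t*β*(γ-β)) • X + (β^2-γ^2) • B
            + (2*γ*β - (t^2-2)*β^2) • (1 : Matrix (Fin 2) (Fin 2) ℂ) - 1 = 0 := by
          rw [hE]; simp
        have comb : (γ-β) • ((t*γ) • (B*X) - (t*β) • X - (γ+β) • B
            + ((t^2-2)*β+β-γ) • (1 : Matrix (Fin 2) (Fin 2) ℂ))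
            = (t*γ*(γ-β)) • (B*X) - (t*β*(γ-β)) • X + (β^2-γ^2) • B
            + (2*γ*β - (t^2-2)*β^2) • (1 : Matrix (Fin 2) (Fin 2) ℂ) - 1 := by
          match_scalars <;>
            first
              | ring1
              | linear_combination hCk
              | linear_combination -hCk
        have := comb.trans hEz
        rcases smul_eq_zero.mp this with h | h
        · exact absurd h hδ
        · exact h
      have hG : (t*γ) • (B*(X*X)) - (t*β) • (X*X) - (γ+β) • (B*X)
          + ((t^2-2)*β+β-γ) • X = 0 := by
        have h := congrArg (· * X) hF
        simpa only [add_mul, sub_mul, smul_mul_assoc, zero_mul, one_mul, mul_assoc] using h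
      rw [hBXX, hXX] at hG
      have hfinal : B * X + X - t • (1 : Matrix (Fin 2) (Fin 2) ℂ) = 0 := by
        have comb : B * X + X - t • (1 : Matrix (Fin 2) (Fin 2) ℂ)
            = (t*γ) • ((t*γ) • (B*X) - (t*β) • X - (γ+β) • B
                + ((t^2-2)*β+β-γ) • (1 : Matrix (Fin 2) (Fin 2) ℂ))
              - (γ+β) • ((t*γ) • (t • (B*X) - B) - (t*β) • (t • X - 1) - (γ+β) • (B*X)
                + ((t^2-2)*β+β-γ) • X) := by
          match_scalars <;>
            first
              | ring1
              | linear_combination hCk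
              | linear_combination -hCk
              | linear_combination t*hCk
              | linear_combination -t*hCk
        rw [comb, hF, hG, smul_zero, smul_zero, sub_zero]
      apply hinj
      show ((X₂ * X₁ : Matrix.SpecialLinearGroup (Fin 2) ℂ) : Matrix (Fin 2) (Fin 2) ℂ)
        = ((1 : Matrix.SpecialLinearGroup (Fin 2) ℂ) : Matrix (Fin 2) (Fin 2) ℂ)
      rw [Matrix.SpecialLinearGroup.coe_mul, Matrix.SpecialLinearGroup.coe_one, hX2coe, ← hXdef]
      have hBX : B * X = t • (1 : Matrix (Fin 2) (Fin 2) ℂ) - X := by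
        calc B*X = (B*X + X - t • (1 : Matrix (Fin 2) (Fin 2) ℂ))
              + (t • (1 : Matrix (Fin 2) (Fin 2) ℂ) - X) := by abel
        _ = 0 + (t • (1 : Matrix (Fin 2) (Fin 2) ℂ) - X) := by rw [hfinal]
        _ = t • (1 : Matrix (Fin 2) (Fin 2) ℂ) - X := by rw [zero_add]
      calc B * X * X = (t • (1 : Matrix (Fin 2) (Fin 2) ℂ) - X) * X := by rw [hBX]
      _ = t • X - X * X := by rw [sub_mul, smul_mul_assoc, one_mul]
      _ = t • X - (t • X - 1) := by rw [hXX]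
      _ = 1 := by module
  · rintro (hgb | h21)
    · apply hinj
      show (A : Matrix (Fin 2) (Fin 2) ℂ)
        = ((1 : Matrix.SpecialLinearGroup (Fin 2) ℂ) : Matrix (Fin 2) (Fin 2) ℂ)
      rw [hAm, Matrix.SpecialLinearGroup.coe_one, hgb]
      have hCk' := hCk
      rw [hgb] at hCk'
      match_scalars <;>
        first
          | ring1
          | linear_combination hCk'
          | linear_combination -hCk'
    · have hX12 : X₁⁻¹ = X₂ := inv_eq_of_mul_eq_one_left h21
      have hY2 : Y = X₂ * X₂ := by rw [hY, hX12]
      have hc : Commute X₂ Y := by rw [hY2]; exact (Commute.refl X₂).mul_right (Commute.refl X₂)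
      rw [hA, ← (hc.zpow_right k).eq, mul_assoc X₂, ← _root_.zpow_add,
        show k + -k = 0 by omega, zpow_zero, mul_one]
      exact h21
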